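/- Let A, B, C, P ∈ ℝ² with A, B, C non-collinear. Set a = ‖C − B‖, b = ‖C − A‖, D = (A − B)·(a/(a + b)) + B, and L = ‖D − C‖² − ((A − C) × (D − C))² / b². If t ∈ ℝ is a root of L·t² + 2·((D − C) · (C − P))·t + ‖C − P‖² = 0, then the point I = (D − C)·t + C satisfies ‖I − P‖ = |(A − C) × (C − I)| / b = |(B − C) × (C − I)| / a; that is, the circle centred at I passing through P is tangent to both lines CA and CB. -/

import Mathlib

noncomputable section

abbrev Pt := EuclideanSpace ℝ (Fin 2)

def cross (u v : Pt) : ℝ := u 0 * v 1 - u 1 * v 0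

theorem stmt11 (A B C P : Pt) (hncol : cross (B - A) (C - A) ≠ 0) (t : ℝ) :
    let a : ℝ := ‖C - B‖
    let b : ℝ := ‖C - A‖
    let D : Pt := (a / (a + b)) • (A - B) + B
    let L : ℝ := ‖D - C‖ ^ 2 - (cross (A - C) (D - C)) ^ 2 / b ^ 2
    L * t ^ 2 + 2 * (inner ℝ (D - C) (C - P) : ℝ) * t + ‖C - P‖ ^ 2 = 0 →
      let I : Pt := t • (D - C) + C
      ‖I - P‖ = |cross (A - C) (C - I)| / b ∧
        ‖I - P‖ = |cross (B - C) (C - I)| / a := by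
  intro a b D L hquad I
  have ha : a = ‖C - B‖ := rfl
  have hb : b = ‖C - A‖ := rfl
  have hD : D = (a / (a + b)) • (A - B) + B := rfl
  have hL : L = ‖D - C‖ ^ 2 - (cross (A - C) (D - C)) ^ 2 / b ^ 2 := rfl
  have hI : I = t • (D - C) + C := rfl
  have hbpos : 0 < b := by
    rw [hb, norm_pos_iff, sub_ne_zero]
    intro h
    apply hncol
    rw [h]
    simp [cross]
  have hapos : 0 < a := by
    rw [ha, norm_pos_iff, sub_ne_zero]
    intro h
    apply hncol
    rw [h]
    simp [cross]
    ring
  have hab : a + b ≠ 0 := by positivity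
  -- vector identity for D - C
  have hw : D - C = (a / (a + b)) • ((A : Pt) - C) + (b / (a + b)) • (B - C) := by
    rw [hD]
    have h1 : b / (a + b) = 1 - a / (a + b) := by field_simp; ring
    rw [h1]
    module
  have crosslin : ∀ (s r : ℝ) (x y z : Pt), cross z (s • x + r • y) = s * cross z x + r * cross z y := by
    intro s r x y z
    simp [cross]
    ring
  have crossneg : ∀ (s : ℝ) (x z : Pt), cross z (-(s • x)) = -(s * cross z x) := by
    intro s x z
    simp [cross]
    ring
  have crossself : ∀ x : Pt, cross x x = 0 := by intro x; simp [cross]; ring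
  have crossanti : ∀ x y : Pt, cross x y = - cross y x := by intro x y; simp [cross]; ring
  have hcu : cross (A - C) (D - C) = (b / (a + b)) * cross (A - C) (B - C) := by
    rw [hw, crosslin, crossself]
    ring
  have hcv : cross (B - C) (D - C) = -((a / (a + b)) * cross (A - C) (B - C)) := by
    rw [hw, crosslin, crossself, crossanti (B - C) (A - C)]
    ring
  have hCI : C - I = -(t • (D - C)) := by rw [hI]; abel
  have hIP : I - P = t • (D - C) + (C - P) := by rw [hI, add_sub_assoc]
  have hnormsq : ‖I - P‖ ^ 2 = t ^ 2 * ‖D - C‖ ^ 2 + 2 * (inner ℝ (D - C) (C - P) : ℝ) * t + ‖C - P‖ ^ 2 := by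
    rw [hIP, norm_add_sq_real, norm_smul, real_inner_smul_left, mul_pow]
    simp [Real.norm_eq_abs, sq_abs]
    ring
  have key : ‖I - P‖ ^ 2 = t ^ 2 * (cross (A - C) (D - C)) ^ 2 / b ^ 2 := by
    rw [hL] at hquad
    rw [hnormsq]
    linear_combination hquad
  have habs : |cross (A - C) (C - I)| = |t| * |cross (A - C) (D - C)| := by
    rw [hCI, crossneg, abs_neg, abs_mul]
  have h1 : ‖I - P‖ = |cross (A - C) (C - I)| / b := by
    have hsq : ‖I - P‖ ^ 2 = (|cross (A - C) (C - I)| / b) ^ 2 := by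
      rw [key, habs, div_pow, mul_pow, sq_abs, sq_abs]
    have h0 : (0:ℝ) ≤ ‖I - P‖ := norm_nonneg _
    have h0' : (0:ℝ) ≤ |cross (A - C) (C - I)| / b := by positivity
    exact (sq_eq_sq₀ h0 h0').mp hsq
  refine ⟨h1, ?_⟩
  rw [h1]
  have habs2 : |cross (B - C) (C - I)| = |t| * |cross (B - C) (D - C)| := by
    rw [hCI, crossneg, abs_neg, abs_mul]
  rw [habs, habs2, hcu, hcv, abs_neg, abs_mul, abs_mul]
  rw [abs_of_nonneg (le_of_lt (by positivity : (0:ℝ) < b / (a+b))), abs_of_nonneg (le_of_lt (by positivity : (0:ℝ) < a / (a+b)))]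
  field_simp
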